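/- If a sequence of finite graphs G_n with degrees uniformly bounded by D locally (Benjamini–Schramm) converges to a graphing G, then the normalized total ranks converge: r̄(G_n) = 1 − E_u(1/|component of u|) = rank(cycle matroid of G_n)/|V(G_n)| → r̄(G) = 1 − E_x(1/|V(G_x)|). -/

import Mathlib

open MeasureTheory

/-- A graphing: a bounded-degree Borel graph `(J, E)` on a standard Borel space together
with a probability measure `μ` satisfying the measure-preservation (intrinsic
mass-transport) equation `∫_A deg_B = ∫_B deg_A`. -/
structure Graphing (J : Type*) [MeasurableSpace J] where
  /-- the (symmetric) adjacency relation -/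
  E : J → J → Prop
  symm : ∀ x y, E x y → E y x
  measE : MeasurableSet {p : J × J | E p.1 p.2}
  /-- the underlying probability measure -/
  μ : Measure J
  prob : IsProbabilityMeasure μ
  /-- the degree bound -/
  D : ℕ
  degFin : ∀ x, {y | E x y}.Finite
  degBound : ∀ x, ({y | E x y}).ncard ≤ D
  mp : ∀ A B : Set J, MeasurableSet A → MeasurableSet B →
    ∫ x in A, (({y ∈ B | E x y}).ncard : ℝ) ∂μ = ∫ x in B, (({y ∈ A | E x y}).ncard : ℝ) ∂μ

namespace Graphing

variable {J : Type*} [MeasurableSpace J]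

/-- The edge set of a graphing, as a (symmetric) set of ordered pairs. -/
def edgeSet (G : Graphing J) : Set (J × J) := {p | G.E p.1 p.2}

/-- A Borel symmetric subset of the edge set of `G`. -/
def IsEdgeSubset (G : Graphing J) (X : Set (J × J)) : Prop :=
  MeasurableSet X ∧ (∀ x y, (x, y) ∈ X → (y, x) ∈ X) ∧ X ⊆ G.edgeSet

/-- The vertex set of the connected component of `x` in the graph with edge set `X`. -/
def compo (X : Set (J × J)) (x : J) : Set J :=
  {y | Relation.ReflTransGen (fun a b => (a, b) ∈ X) x y}

/-- The number of edges of `X` incident with `x`. -/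
noncomputable def degX (X : Set (J × J)) (x : J) : ℕ := ({y | (x, y) ∈ X}).ncard

/-- The average degree `d̄` of a graphing. -/
noncomputable def avgDeg (G : Graphing J) : ℝ := ∫ x, (({y | G.E x y}).ncard : ℝ) ∂G.μ

/-- The edge measure `η` of a graphing: `η(X) = (1/d̄) ∫ deg_X dμ`. -/
noncomputable def eta (G : Graphing J) (X : Set (J × J)) : ℝ :=
  (∫ x, (degX X x : ℝ) ∂G.μ) / G.avgDeg

/-- The normalized rank `ρ(X) = 1 − E_u(1/|V(G^X_u)|)` of a Borel edge set `X`, with the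
convention `1/|V| = 0` for infinite components (`Nat.card` of an infinite set is `0`). -/
noncomputable def rho (G : Graphing J) (X : Set (J × J)) : ℝ :=
  1 - ∫ x, (1 : ℝ) / (Nat.card ↥(compo X x)) ∂G.μ

/-- A graphing is hyperfinite if edge sets of arbitrarily small edge measure can be
removed so that only finite connected components remain. -/
def Hyperfinite (G : Graphing J) : Prop :=
  ∀ ε : ℝ, 0 < ε → ∃ X : Set (J × J), G.IsEdgeSubset X ∧ G.eta X < ε ∧
    ∀ x : J, (compo (G.edgeSet \ X) x).Finite

/-- A set of edges is a forest if for every edge `(a,b)` there is no path from `a` to `b`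
avoiding that edge; equivalently, the graph it spans has no cycles. -/
def IsForestSet (X : Set (J × J)) : Prop :=
  ∀ a b : J, (a, b) ∈ X →
    ¬ Relation.ReflTransGen
        (fun u v => (u, v) ∈ X ∧ ¬((u = a ∧ v = b) ∨ (u = b ∧ v = a))) a b

/-- A graphing is a forest (all components are trees) if its edge set is a forest. -/
def IsForest (G : Graphing J) : Prop := IsForestSet G.edgeSet

end Graphing

/-- The connected component of `x` under the adjacency relation `E`. -/
def compoRel {V : Type*} (E : V → V → Prop) (x : V) : Set V :=
  {y | Relation.ReflTransGen E x y}

/-- The ball of radius `k` around `x` under the adjacency relation `E`. -/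
def ballRel {V : Type*} (E : V → V → Prop) : ℕ → V → Set V
  | 0, x => {x}
  | (k + 1), x => ballRel E k x ∪ {y | ∃ z ∈ ballRel E k x, E z y}

/-- The rooted `r`-ball around `x` in the graph `(V, E)` is isomorphic (as a rooted graph)
to the pattern graph on `Fin (m + 1)` with adjacency `A` and root `0`. -/
def BallIso {V : Type*} (E : V → V → Prop) (x : V) (r m : ℕ)
    (A : Fin (m + 1) → Fin (m + 1) → Prop) : Prop :=
  ∃ e : {y // y ∈ ballRel E r x} ≃ Fin (m + 1),
    (∀ y : {y // y ∈ ballRel E r x}, (y : V) = x ↔ e y = 0) ∧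
    (∀ y z : {y // y ∈ ballRel E r x}, E (y : V) (z : V) ↔ A (e y) (e z))

/-- The normalized total rank of a finite graph `(V, E)`:
`1 − E_u(1/|component of u|)`, which equals `rank(cycle matroid)/|V| = (|V| − c)/|V|`. -/
noncomputable def finTotalRank (V : Type*) [Fintype V] (E : V → V → Prop) : ℝ :=
  1 - (∑ u : V, (1 : ℝ) / (Nat.card ↥(compoRel E u))) / (Fintype.card V)

section AuxAll
open Set MeasureTheory

section Balls
variable {V : Type*} {E : V → V → Prop}

lemma ballRel_succ_subset {k : ℕ} {x : V} : ballRel E k x ⊆ ballRel E (k+1) x :=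
  subset_union_left

lemma ballRel_mono {j k : ℕ} (h : j ≤ k) {x : V} : ballRel E j x ⊆ ballRel E k x := by
  induction k with
  | zero => rw [Nat.le_zero.mp h]
  | succ k ih =>
    rcases Nat.lt_or_ge j (k+1) with h' | h'
    · exact (ih (Nat.lt_succ_iff.mp h')).trans ballRel_succ_subset
    · rw [le_antisymm h h']

lemma self_mem_ballRel {k : ℕ} {x : V} : x ∈ ballRel E k x := by
  induction k with
  | zero => rfl
  | succ k ih => exact ballRel_succ_subset ih

lemma ballRel_subset_compoRel {k : ℕ} {x : V} : ballRel E k x ⊆ compoRel E x := by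
  induction k with
  | zero => rintro y rfl; exact Relation.ReflTransGen.refl
  | succ k ih =>
    rintro y (hy | ⟨z, hz, hzy⟩)
    · exact ih hy
    · exact Relation.ReflTransGen.tail (ih hz) hzy

lemma mem_compoRel_iff {x y : V} : y ∈ compoRel E x ↔ ∃ k, y ∈ ballRel E k x := by
  constructor
  · intro h
    induction h with
    | refl => exact ⟨0, rfl⟩
    | tail _ hbc ih =>
      obtain ⟨k, hk⟩ := ih
      exact ⟨k + 1, Or.inr ⟨_, hk, hbc⟩⟩
  · rintro ⟨k, hk⟩
    exact ballRel_subset_compoRel hk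

lemma compoRel_eq_ballRel {k : ℕ} {x : V}
    (h : ballRel E (k+1) x = ballRel E k x) : compoRel E x = ballRel E k x := by
  have hstab : ∀ j, ballRel E (k + j) x = ballRel E k x := by
    intro j
    induction j with
    | zero => rfl
    | succ j ih =>
      show ballRel E ((k+j)+1) x = _
      show ballRel E (k+j) x ∪ {y | ∃ z ∈ ballRel E (k+j) x, E z y} = _
      rw [ih]; exact h
  apply subset_antisymm _ ballRel_subset_compoRel
  intro y hy
  obtain ⟨j, hj⟩ := mem_compoRel_iff.mp hy
  have : y ∈ ballRel E (k + j) x := ballRel_mono (Nat.le_add_left j k) hj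
  rwa [hstab j] at this

lemma ballRel_exists_finset {D : ℕ} (hdegF : ∀ z : V, {y | E z y}.Finite)
    (hdegC : ∀ z : V, {y | E z y}.ncard ≤ D) (k : ℕ) (x : V) :
    ∃ S : Finset V, ballRel E k x ⊆ ↑S ∧ S.card ≤ (D+1)^k := by
  classical
  induction k with
  | zero => exact ⟨{x}, by simp [ballRel], by simp⟩
  | succ k ih =>
    obtain ⟨S, hS, hScard⟩ := ih
    refine ⟨S.biUnion (fun z => insert z (hdegF z).toFinset), ?_, ?_⟩
    · rintro y (hy | ⟨z, hz, hzy⟩)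
      · have : y ∈ S := hS hy
        exact Finset.mem_coe.mpr (Finset.mem_biUnion.mpr ⟨y, this, Finset.mem_insert_self _ _⟩)
      · refine Finset.mem_coe.mpr (Finset.mem_biUnion.mpr ⟨z, hS hz, ?_⟩)
        exact Finset.mem_insert_of_mem ((hdegF z).mem_toFinset.mpr hzy)
    · calc (S.biUnion (fun z => insert z (hdegF z).toFinset)).card
          ≤ ∑ z ∈ S, (insert z (hdegF z).toFinset).card := Finset.card_biUnion_le
        _ ≤ ∑ _z ∈ S, (D + 1) := by
            refine Finset.sum_le_sum (fun z _ => ?_)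
            have h1 : (hdegF z).toFinset.card = {y | E z y}.ncard :=
              (Set.ncard_eq_toFinset_card _ (hdegF z)).symm
            have h2 := hdegC z
            have h3 := Finset.card_insert_le z (hdegF z).toFinset
            omega
        _ = S.card * (D + 1) := by rw [Finset.sum_const, smul_eq_mul]
        _ ≤ (D+1)^k * (D+1) := Nat.mul_le_mul_right _ hScard
        _ = (D+1)^(k+1) := by ring

lemma ballRel_finite {D : ℕ} (hdegF : ∀ z : V, {y | E z y}.Finite)
    (hdegC : ∀ z : V, {y | E z y}.ncard ≤ D) (k : ℕ) (x : V) :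
    (ballRel E k x).Finite := by
  obtain ⟨S, hS, -⟩ := ballRel_exists_finset hdegF hdegC k x
  exact Set.Finite.subset S.finite_toSet hS

lemma ballRel_ncard_le {D : ℕ} (hdegF : ∀ z : V, {y | E z y}.Finite)
    (hdegC : ∀ z : V, {y | E z y}.ncard ≤ D) (k : ℕ) (x : V) :
    (ballRel E k x).ncard ≤ (D+1)^k := by
  obtain ⟨S, hS, hc⟩ := ballRel_exists_finset hdegF hdegC k x
  exact le_trans (Set.ncard_le_ncard hS S.finite_toSet) (by simpa using hc)

lemma ballRel_encard_le {D : ℕ} (hdegF : ∀ z : V, {y | E z y}.Finite)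
    (hdegC : ∀ z : V, {y | E z y}.ncard ≤ D) (k : ℕ) (x : V) :
    (ballRel E k x).encard ≤ ((D+1)^k : ℕ) := by
  have hfin := ballRel_finite hdegF hdegC k x
  rw [Set.Finite.encard_eq_coe_toFinset_card hfin]
  have : hfin.toFinset.card = (ballRel E k x).ncard := (Set.ncard_eq_toFinset_card _ hfin).symm
  rw [this]
  exact_mod_cast ballRel_ncard_le hdegF hdegC k x

lemma ballRel_stab_or_card {D : ℕ} (hdegF : ∀ z : V, {y | E z y}.Finite)
    (hdegC : ∀ z : V, {y | E z y}.ncard ≤ D) (k : ℕ) (x : V) :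
    compoRel E x = ballRel E k x ∨ k + 1 ≤ (ballRel E k x).ncard := by
  induction k with
  | zero =>
    right
    show 1 ≤ ({x} : Set V).ncard
    simp
  | succ k ih =>
    by_cases hstab : ballRel E (k+1) x = ballRel E k x
    · left
      rw [hstab]
      exact compoRel_eq_ballRel hstab
    · rcases ih with h | h
      · left
        apply subset_antisymm
        · rw [h]; exact ballRel_succ_subset
        · exact ballRel_subset_compoRel
      · right
        have hss : ballRel E k x ⊂ ballRel E (k+1) x :=
          HasSubset.Subset.ssubset_of_ne ballRel_succ_subset (fun h' => hstab h'.symm)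
        have := Set.ncard_lt_ncard hss (ballRel_finite hdegF hdegC (k+1) x)
        omega

end Balls

section Counting

/-- Rooted isomorphism of patterns. -/
def RootIso {m : ℕ} (A A' : Fin (m+1) → Fin (m+1) → Prop) : Prop :=
  ∃ σ : Equiv.Perm (Fin (m+1)), σ 0 = 0 ∧ ∀ i j, A i j ↔ A' (σ i) (σ j)

lemma RootIso.refl' {m : ℕ} (A : Fin (m+1) → Fin (m+1) → Prop) : RootIso A A :=
  ⟨Equiv.refl _, _root_.rfl, fun _ _ => Iff.rfl⟩

lemma RootIso.symm {m : ℕ} {A A' : Fin (m+1) → Fin (m+1) → Prop}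
    (h : RootIso A A') : RootIso A' A := by
  obtain ⟨σ, h0, hiff⟩ := h
  refine ⟨σ.symm, by rw [Equiv.symm_apply_eq, h0], fun i j => ?_⟩
  have := (hiff (σ.symm i) (σ.symm j)).symm
  rwa [Equiv.apply_symm_apply, Equiv.apply_symm_apply] at this

lemma RootIso.trans {m : ℕ} {A A' A'' : Fin (m+1) → Fin (m+1) → Prop}
    (h : RootIso A A') (h' : RootIso A' A'') : RootIso A A'' := by
  obtain ⟨σ, h0, hiff⟩ := h
  obtain ⟨τ, t0, tiff⟩ := h'
  exact ⟨σ.trans τ, by simp [Equiv.trans_apply, h0, t0],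
    fun i j => (hiff i j).trans (tiff (σ i) (σ j))⟩

variable {V : Type*} {E : V → V → Prop} {x : V} {r m : ℕ}
  {A A' : Fin (m+1) → Fin (m+1) → Prop}

/-- witness formulation -/
def BallWitness (E : V → V → Prop) (x : V) (r m : ℕ)
    (A : Fin (m + 1) → Fin (m + 1) → Prop) (f : Fin (m+1) → V) : Prop :=
  f 0 = x ∧ (∀ i, f i ∈ ballRel E r x) ∧ Function.Injective f ∧
  (∀ z ∈ ballRel E r x, ∃ i, f i = z) ∧ (∀ i j, E (f i) (f j) ↔ A i j)

lemma ballIso_iff_witness :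
    BallIso E x r m A ↔ ∃ f, BallWitness E x r m A f := by
  constructor
  · rintro ⟨e, hroot, hedge⟩
    refine ⟨fun i => (e.symm i : V), ?_, fun i => (e.symm i).2, ?_, ?_, ?_⟩
    · exact (hroot (e.symm 0)).mpr (e.apply_symm_apply 0)
    · intro i j hij
      have : e.symm i = e.symm j := Subtype.ext hij
      simpa using congrArg e this
    · intro z hz
      exact ⟨e ⟨z, hz⟩, by simp⟩
    · intro i j
      have := hedge (e.symm i) (e.symm j)
      rwa [e.apply_symm_apply, e.apply_symm_apply] at this
  · rintro ⟨f, h0, hmem, hinj, hcov, hedge⟩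
    have hbij : Function.Bijective (fun i => (⟨f i, hmem i⟩ : {y // y ∈ ballRel E r x})) := by
      constructor
      · intro i j hij
        exact hinj (congrArg Subtype.val hij)
      · rintro ⟨z, hz⟩
        obtain ⟨i, hi⟩ := hcov z hz
        exact ⟨i, Subtype.ext hi⟩
    set g := Equiv.ofBijective _ hbij with hg
    have hval : ∀ i, (g i : V) = f i := fun i => rfl
    refine ⟨g.symm, fun y => ?_, fun y z => ?_⟩
    · have hy : (y : V) = f (g.symm y) := by
        rw [← hval (g.symm y), g.apply_symm_apply]
      constructor
      · intro hyx
        rw [Equiv.symm_apply_eq]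
        exact Subtype.ext (by rw [hval 0, h0, hyx])
      · intro h
        rw [hy, h, h0]
    · have hy : (y : V) = f (g.symm y) := by
        rw [← hval (g.symm y), g.apply_symm_apply]
      have hz : (z : V) = f (g.symm z) := by
        rw [← hval (g.symm z), g.apply_symm_apply]
      rw [hy, hz]
      exact hedge _ _

lemma BallIso.ncard_eq (h : BallIso E x r m A) :
    (ballRel E r x).ncard = m + 1 := by
  obtain ⟨e, -, -⟩ := h
  rw [← Nat.card_coe_set_eq]
  rw [Nat.card_congr e]
  simp

lemma exists_ballIso (hfin : (ballRel E r x).Finite)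
    (hcard : (ballRel E r x).ncard = m + 1) :
    ∃ A : Fin (m+1) → Fin (m+1) → Prop, BallIso E x r m A := by
  have hxm : x ∈ ballRel E r x := self_mem_ballRel
  haveI : Fintype (ballRel E r x) := hfin.fintype
  have hc : Fintype.card (ballRel E r x) = m + 1 := by
    rwa [← Nat.card_coe_set_eq, Nat.card_eq_fintype_card] at hcard
  let e₀ : (ballRel E r x) ≃ Fin (m+1) := Fintype.equivFinOfCardEq hc
  let e : {y // y ∈ ballRel E r x} ≃ Fin (m+1) :=
    e₀.trans (Equiv.swap (e₀ ⟨x, hxm⟩) 0)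
  have hroot : e ⟨x, hxm⟩ = 0 := Equiv.swap_apply_left _ _
  refine ⟨fun i j => E (e.symm i : V) (e.symm j : V), ?_⟩
  rw [ballIso_iff_witness]
  refine ⟨fun i => (e.symm i : V), ?_, fun i => (e.symm i).2, ?_, ?_, fun i j => Iff.rfl⟩
  · show ((e.symm 0 : {y // y ∈ ballRel E r x}) : V) = x
    have h2 : e.symm 0 = ⟨x, hxm⟩ := by rw [Equiv.symm_apply_eq, hroot]
    rw [h2]
  · intro i j hij
    simpa using congrArg e (Subtype.ext hij : e.symm i = e.symm j)
  · intro z hz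
    exact ⟨e ⟨z, hz⟩, by simp⟩

lemma BallIso.of_rootIso (h : BallIso E x r m A) (hAA' : RootIso A A') :
    BallIso E x r m A' := by
  obtain ⟨e, hroot, hedge⟩ := h
  obtain ⟨σ, h0, hiff⟩ := hAA'
  refine ⟨e.trans σ, fun y => ?_, fun y z => ?_⟩
  · refine (hroot y).trans ⟨fun h => ?_, fun h => ?_⟩
    · show σ (e y) = 0
      rw [h, h0]
    · have : σ (e y) = σ 0 := by rw [h0]; exact h
      exact σ.injective this
  · exact (hedge y z).trans (hiff _ _)

lemma BallIso.rootIso (h : BallIso E x r m A) (h' : BallIso E x r m A') :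
    RootIso A A' := by
  obtain ⟨e, hroot, hedge⟩ := h
  obtain ⟨e', hroot', hedge'⟩ := h'
  refine ⟨e.symm.trans e', ?_, fun i j => ?_⟩
  · show e' (e.symm 0) = 0
    exact (hroot' (e.symm 0)).mp ((hroot (e.symm 0)).mpr (e.apply_symm_apply 0))
  · have h1 := hedge (e.symm i) (e.symm j)
    rw [e.apply_symm_apply, e.apply_symm_apply] at h1
    exact h1.symm.trans (hedge' (e.symm i) (e.symm j))

open Classical in
/-- number of patterns rooted-isomorphic to `A` -/
noncomputable def NA {m : ℕ} (A : Fin (m+1) → Fin (m+1) → Prop) : ℕ :=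
  (Finset.univ.filter (fun A' => RootIso A A')).card

open Classical in
lemma NA_pos {m : ℕ} (A : Fin (m+1) → Fin (m+1) → Prop) : 0 < NA A :=
  Finset.card_pos.mpr ⟨A, Finset.mem_filter.mpr ⟨Finset.mem_univ _, RootIso.refl' A⟩⟩

open Classical in
lemma NA_eq_of_rootIso {m : ℕ} {A A' : Fin (m+1) → Fin (m+1) → Prop}
    (h : RootIso A A') : NA A' = NA A := by
  unfold NA
  congr 1
  refine Finset.filter_congr (fun A'' _ => ?_)
  exact ⟨fun h2 => h.trans h2, fun h2 => h.symm.trans h2⟩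

open Classical in
lemma pointwise_ball_sum {V : Type*} {E : V → V → Prop} {D : ℕ}
    (hdegF : ∀ z : V, {y | E z y}.Finite) (hdegC : ∀ z : V, {y | E z y}.ncard ≤ D)
    (r : ℕ) (x : V) :
    ∑ m ∈ Finset.range ((D+1)^r), ∑ A : Fin (m+1) → Fin (m+1) → Prop,
      (if BallIso E x r m A then ((1:ℝ)/(m+1)) / (NA A) else 0)
      = 1 / ((ballRel E r x).ncard : ℝ) := by
  have hfin := ballRel_finite hdegF hdegC r x
  set n := (ballRel E r x).ncard with hn
  have hn1 : 0 < n := (Set.ncard_pos hfin).mpr ⟨x, self_mem_ballRel⟩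
  have hnM : n ≤ (D+1)^r := ballRel_ncard_le hdegF hdegC r x
  have hmem : n - 1 ∈ Finset.range ((D+1)^r) := Finset.mem_range.mpr (by omega)
  have hside : ∀ m ∈ Finset.range ((D+1)^r), m ≠ n - 1 →
      (∑ A : Fin (m+1) → Fin (m+1) → Prop,
        (if BallIso E x r m A then ((1:ℝ)/(m+1)) / (NA A) else 0)) = 0 := by
    intro m _ hm
    refine Finset.sum_eq_zero (fun A _ => ?_)
    rw [if_neg]
    intro h
    have h2 := h.ncard_eq
    rw [← hn] at h2
    omega
  rw [Finset.sum_eq_single_of_mem (n-1) hmem hside]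
  obtain ⟨A₀, hA₀⟩ := exists_ballIso (m := n-1) hfin (by rw [← hn]; omega)
  have key : ∀ A : Fin (n-1+1) → Fin (n-1+1) → Prop,
      (if BallIso E x r (n-1) A then ((1:ℝ)/(↑(n-1)+1)) / (NA A) else 0)
      = ((1:ℝ)/(↑(n-1)+1)) / (NA A₀) * (if RootIso A₀ A then 1 else 0) := by
    intro A
    by_cases h : BallIso E x r (n-1) A
    · rw [if_pos h, if_pos (hA₀.rootIso h), NA_eq_of_rootIso (hA₀.rootIso h), mul_one]
    · rw [if_neg h, if_neg (fun h2 => h (hA₀.of_rootIso h2)), mul_zero]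
  rw [Finset.sum_congr rfl (fun A _ => key A), ← Finset.mul_sum, Finset.sum_boole]
  have hcardNA : (Finset.univ.filter (fun A' => RootIso A₀ A')).card = NA A₀ := rfl
  rw [hcardNA]
  have hNA : (NA A₀ : ℝ) ≠ 0 := Nat.cast_ne_zero.mpr (NA_pos A₀).ne'
  rw [div_mul_cancel₀ _ hNA]
  have hcast : ((n - 1 : ℕ) : ℝ) + 1 = (n : ℝ) := by
    have : n - 1 + 1 = n := by omega
    exact_mod_cast congrArg (Nat.cast : ℕ → ℝ) this
  rw [hcast]

end Counting

section Meas
universe u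

theorem meas_proj_aux {Y : Type u} [MeasurableSpace Y] [StandardBorelSpace Y] (D : ℕ) :
    ∀ (X : Type u) [MeasurableSpace X] [StandardBorelSpace X] (F : Set (X × Y)),
      MeasurableSet F → (∀ x : X, {y | (x, y) ∈ F}.encard ≤ D) →
      MeasurableSet (Prod.fst '' F) := by
  induction D with
  | zero =>
    intro X _ _ F hF hsec
    have hFe : F = ∅ := by
      ext p
      simp only [mem_empty_iff_false, iff_false]
      intro hp
      have h := hsec p.1
      have h' : {y | (p.1, y) ∈ F}.encard = 0 := le_antisymm (by exact_mod_cast h) zero_le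
      rw [encard_eq_zero] at h'
      exact absurd h' (Nonempty.ne_empty ⟨p.2, hp⟩)
    simp [hFe]
  | succ D ih =>
    intro X _ _ F hF hsec
    obtain ⟨ι, hι⟩ := exists_measurableEmbedding_real Y
    set Flt : Set ((X × Y) × Y) :=
      {q | q.1 ∈ F ∧ (q.1.1, q.2) ∈ F ∧ ι q.2 < ι q.1.2} with hFltdef
    have hFltMeas : MeasurableSet Flt := by
      apply MeasurableSet.inter
      · exact measurable_fst hF
      apply MeasurableSet.inter
      · exact ((measurable_fst.fst).prodMk measurable_snd) hF
      · exact ((hι.measurable.comp measurable_snd).prodMk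
          (hι.measurable.comp measurable_fst.snd))
          ((isOpen_lt continuous_fst continuous_snd).measurableSet)
    have keybound : ∀ (x : X) (y : Y), (x, y) ∈ F →
        ({y' | (x, y') ∈ F} \ {y}).encard ≤ D := by
      intro x y hxy
      have h1 : ({y' | (x, y') ∈ F} \ {y}).encard + 1 = {y' | (x, y') ∈ F}.encard :=
        encard_diff_singleton_add_one hxy
      have h2 : ({y' | (x, y') ∈ F} \ {y}).encard + 1 ≤ (D : ℕ∞) + 1 := by
        rw [h1]
        have h3 := hsec x
        push_cast at h3 ⊢
        exact h3
      exact (ENat.add_le_add_iff_right (by simp)).mp h2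
    have hFltSec : ∀ p : X × Y, {y' | (p, y') ∈ Flt}.encard ≤ D := by
      intro p
      by_cases hp : p ∈ F
      · refine le_trans (encard_mono ?_) (keybound p.1 p.2 hp)
        intro y' hy'
        obtain ⟨-, h2, h3⟩ := hy'
        exact ⟨h2, fun he => absurd h3 (by simp only [mem_singleton_iff] at he; simp [he])⟩
      · have he : {y' | (p, y') ∈ Flt} = ∅ := by
          ext y'; simp only [mem_empty_iff_false, iff_false]
          intro h; exact hp h.1
        simp [he]
    have hB : MeasurableSet (Prod.fst '' Flt) := ih (X × Y) Flt hFltMeas hFltSec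
    set B := Prod.fst '' Flt with hBdef
    set M := F \ B with hMdef
    have hMmeas : MeasurableSet M := hF.diff hB
    have hMinj : InjOn Prod.fst M := by
      rintro p hp q hq hpq
      by_contra hne
      have h2 : p.2 ≠ q.2 := fun h => hne (Prod.ext hpq h)
      have hi : ι p.2 ≠ ι q.2 := fun h => h2 (hι.injective h)
      rcases hi.lt_or_gt with h | h
      · refine hq.2 ⟨(q, p.2), ⟨hq.1, ?_, ?_⟩, rfl⟩
        · show (q.1, p.2) ∈ F
          rw [← hpq]
          exact (Prod.mk.eta (p := p)) ▸ hp.1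
        · exact h
      · refine hp.2 ⟨(p, q.2), ⟨hp.1, ?_, ?_⟩, rfl⟩
        · show (p.1, q.2) ∈ F
          rw [hpq]
          exact (Prod.mk.eta (p := q)) ▸ hq.1
        · exact h
    have hprojM : MeasurableSet (Prod.fst '' M) :=
      hMmeas.image_of_measurable_injOn measurable_fst hMinj
    set F2 := F ∩ B with hF2def
    have hF2meas : MeasurableSet F2 := hF.inter hB
    have hF2sec : ∀ x : X, {y | (x, y) ∈ F2}.encard ≤ D := by
      intro x
      by_cases hne : {y | (x, y) ∈ F}.Nonempty
      · have hfin : {y | (x, y) ∈ F}.Finite := by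
          have h3 := hsec x
          rw [encard_le_coe_iff] at h3
          exact h3.1
        obtain ⟨y₀, hy₀, hy₀min⟩ := Set.exists_min_image _ ι hfin hne
        refine le_trans (encard_mono ?_) (keybound x y₀ hy₀)
        intro y hy
        refine ⟨hy.1, ?_⟩
        obtain ⟨q, hq, hqfst⟩ := hy.2
        obtain ⟨-, hq2, hq3⟩ := hq
        have hx1 : q.1.1 = x := by rw [hqfst]
        have hx2 : q.1.2 = y := by rw [hqfst]
        intro hyy0
        simp only [mem_singleton_iff] at hyy0
        have hmem : (x, q.2) ∈ F := by rw [← hx1]; exact hq2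
        have hle := hy₀min q.2 hmem
        rw [hx2, hyy0] at hq3
        exact absurd hq3 (not_lt.mpr hle)
      · have he : {y | (x, y) ∈ F2} = ∅ := by
          ext y; simp only [mem_empty_iff_false, iff_false]
          intro h; exact hne ⟨y, h.1⟩
        simp [he]
    have hsplit : F = M ∪ F2 := by
      rw [hMdef, hF2def]
      ext p; by_cases h : p ∈ B <;> simp [h]
    rw [hsplit, image_union]
    exact hprojM.union (ih X F2 hF2meas hF2sec)


variable {J : Type u} [MeasurableSpace J] [StandardBorelSpace J]

lemma image_fst_eq {X Y : Type*} (G : Set (X × Y)) :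
    Prod.fst '' G = {x | ∃ y, (x, y) ∈ G} := by
  ext x
  constructor
  · rintro ⟨⟨a, b⟩, h, rfl⟩
    exact ⟨b, h⟩
  · rintro ⟨y, hy⟩
    exact ⟨(x, y), hy, rfl⟩

lemma meas_eq_set {X : Type*} [MeasurableSpace X] {f g : X → J}
    (hf : Measurable f) (hg : Measurable g) : MeasurableSet {x | f x = g x} := by
  obtain ⟨ι, hι⟩ := exists_measurableEmbedding_real J
  have h1 : {x | f x = g x} = (fun x => (ι (f x), ι (g x))) ⁻¹' {q : ℝ × ℝ | q.1 = q.2} := by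
    ext x
    simp only [Set.mem_setOf_eq, Set.mem_preimage]
    exact ⟨fun h => by rw [h], fun h => hι.injective h⟩
  rw [h1]
  exact ((hι.measurable.comp hf).prodMk (hι.measurable.comp hg))
    (isClosed_eq continuous_fst continuous_snd).measurableSet

lemma meas_comp_rel {R S : Set (J × J)} (hR : MeasurableSet R) (hS : MeasurableSet S)
    {c : ℕ} (hsec : ∀ x : J, {z | (x, z) ∈ R}.encard ≤ c) :
    MeasurableSet {p : J × J | ∃ z, (p.1, z) ∈ R ∧ (z, p.2) ∈ S} := by
  have h1 : {p : J × J | ∃ z, (p.1, z) ∈ R ∧ (z, p.2) ∈ S}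
      = Prod.fst '' {q : (J × J) × J | (q.1.1, q.2) ∈ R ∧ (q.2, q.1.2) ∈ S} := by
    rw [image_fst_eq]
    rfl
  rw [h1]
  refine meas_proj_aux c (J × J) _ ?_ ?_
  · exact ((measurable_fst.fst.prodMk measurable_snd) hR).inter
      ((measurable_snd.prodMk measurable_fst.snd) hS)
  · intro p
    refine le_trans (encard_mono ?_) (hsec p.1)
    intro z hz
    exact hz.1

variable {E : J → J → Prop} {D : ℕ}

lemma meas_ballRel (hE : MeasurableSet {p : J × J | E p.1 p.2})
    (hdegF : ∀ z : J, {y | E z y}.Finite) (hdegC : ∀ z : J, {y | E z y}.ncard ≤ D)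
    (r : ℕ) : MeasurableSet {p : J × J | p.2 ∈ ballRel E r p.1} := by
  induction r with
  | zero =>
    have h1 : {p : J × J | p.2 ∈ ballRel E 0 p.1} = {p : J × J | p.2 = p.1} := rfl
    rw [h1]
    exact meas_eq_set measurable_snd measurable_fst
  | succ r ih =>
    have h1 : {p : J × J | p.2 ∈ ballRel E (r+1) p.1}
        = {p : J × J | p.2 ∈ ballRel E r p.1}
          ∪ {p : J × J | ∃ z, (p.1, z) ∈ {q : J × J | q.2 ∈ ballRel E r q.1}
              ∧ (z, p.2) ∈ {q : J × J | E q.1 q.2}} := by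
      ext ⟨a, b⟩
      show b ∈ ballRel E r a ∪ {y | ∃ z ∈ ballRel E r a, E z y} ↔ _
      simp only [Set.mem_union, Set.mem_setOf_eq]
    rw [h1]
    refine ih.union (meas_comp_rel ih hE (c := (D+1)^r) ?_)
    intro x
    exact ballRel_encard_le hdegF hdegC r x

lemma encard_pi_le {s : Set J} (hfin : s.Finite) {c : ℕ} (hc : s.encard ≤ c) (k : ℕ) :
    {f : Fin k → J | ∀ i, f i ∈ s}.encard ≤ (c^k : ℕ) := by
  classical
  have hsub : {f : Fin k → J | ∀ i, f i ∈ s}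
      ⊆ ↑(Fintype.piFinset (fun _ : Fin k => hfin.toFinset)) := by
    intro f hf
    simp only [Finset.mem_coe, Fintype.mem_piFinset]
    intro i
    exact hfin.mem_toFinset.mpr (hf i)
  refine le_trans (encard_mono hsub) ?_
  rw [encard_coe_eq_coe_finsetCard]
  have h1 : (Fintype.piFinset (fun _ : Fin k => hfin.toFinset)).card = hfin.toFinset.card ^ k := by
    rw [Fintype.card_piFinset]
    simp
  rw [h1]
  have h2 : hfin.toFinset.card ≤ c := by
    have := hc
    rwa [Set.Finite.encard_eq_coe_toFinset_card hfin, Nat.cast_le] at this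
  exact_mod_cast Nat.pow_le_pow_left h2 k

lemma meas_ballIso (hE : MeasurableSet {p : J × J | E p.1 p.2})
    (hdegF : ∀ z : J, {y | E z y}.Finite) (hdegC : ∀ z : J, {y | E z y}.ncard ≤ D)
    (r m : ℕ) (A : Fin (m+1) → Fin (m+1) → Prop) :
    MeasurableSet {x : J | BallIso E x r m A} := by
  have hBset := meas_ballRel hE hdegF hdegC r
  have hev : ∀ i : Fin (m+1), Measurable (fun q : J × (Fin (m+1) → J) => q.2 i) :=
    fun i => (measurable_pi_apply i).comp measurable_snd
  have h0 : MeasurableSet {q : J × (Fin (m+1) → J) | q.2 0 = q.1} :=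
    meas_eq_set (hev 0) measurable_fst
  have h1 : MeasurableSet {q : J × (Fin (m+1) → J) | ∀ i, q.2 i ∈ ballRel E r q.1} := by
    rw [Set.setOf_forall]
    refine MeasurableSet.iInter (fun i => ?_)
    exact (measurable_fst.prodMk (hev i)) hBset
  have h2 : MeasurableSet {q : J × (Fin (m+1) → J) | ∀ i j, i ≠ j → q.2 i ≠ q.2 j} := by
    rw [Set.setOf_forall]
    refine MeasurableSet.iInter (fun i => ?_)
    rw [Set.setOf_forall]
    refine MeasurableSet.iInter (fun j => ?_)
    by_cases hij : i = j
    · have he : {q : J × (Fin (m+1) → J) | i ≠ j → q.2 i ≠ q.2 j} = Set.univ := by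
        ext q; simp [hij]
      rw [he]; exact MeasurableSet.univ
    · have he : {q : J × (Fin (m+1) → J) | i ≠ j → q.2 i ≠ q.2 j}
          = {q : J × (Fin (m+1) → J) | q.2 i = q.2 j}ᶜ := by
        ext q; simp [hij]
      rw [he]
      exact (meas_eq_set (hev i) (hev j)).compl
  have h3 : MeasurableSet {q : J × (Fin (m+1) → J) | ∀ z ∈ ballRel E r q.1, ∃ i, q.2 i = z} := by
    have he : {q : J × (Fin (m+1) → J) | ∀ z ∈ ballRel E r q.1, ∃ i, q.2 i = z}
        = (Prod.fst '' {qz : (J × (Fin (m+1) → J)) × J |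
            qz.2 ∈ ballRel E r qz.1.1 ∧ ∀ i, qz.1.2 i ≠ qz.2})ᶜ := by
      rw [image_fst_eq]
      ext q
      simp only [Set.mem_setOf_eq, Set.mem_compl_iff, not_exists]
      push_neg
      constructor
      · intro h z hz
        obtain ⟨i, hi⟩ := h z hz
        exact ⟨i, hi⟩
      · intro h z hz
        obtain ⟨i, hi⟩ := h z hz
        exact ⟨i, hi⟩
    rw [he]
    refine MeasurableSet.compl ?_
    refine meas_proj_aux ((D+1)^r) _ _ ?_ ?_
    · refine MeasurableSet.inter ?_ ?_
      · exact ((measurable_fst.fst).prodMk measurable_snd) hBset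
      · show MeasurableSet {qz : (J × (Fin (m+1) → J)) × J | ∀ i, qz.1.2 i ≠ qz.2}
        rw [Set.setOf_forall]
        refine MeasurableSet.iInter (fun i => ?_)
        exact (meas_eq_set ((measurable_pi_apply i).comp measurable_fst.snd)
          measurable_snd).compl
    · intro q
      refine le_trans (encard_mono (fun z hz => hz.1)) ?_
      exact ballRel_encard_le hdegF hdegC r q.1
  have h4 : MeasurableSet {q : J × (Fin (m+1) → J) | ∀ i j, E (q.2 i) (q.2 j) ↔ A i j} := by
    rw [Set.setOf_forall]
    refine MeasurableSet.iInter (fun i => ?_)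
    rw [Set.setOf_forall]
    refine MeasurableSet.iInter (fun j => ?_)
    by_cases hA : A i j
    · have he : {q : J × (Fin (m+1) → J) | E (q.2 i) (q.2 j) ↔ A i j}
          = (fun q : J × (Fin (m+1) → J) => (q.2 i, q.2 j)) ⁻¹' {p : J × J | E p.1 p.2} := by
        ext q; simp [hA]
      rw [he]
      exact ((hev i).prodMk (hev j)) hE
    · have he : {q : J × (Fin (m+1) → J) | E (q.2 i) (q.2 j) ↔ A i j}
          = ((fun q : J × (Fin (m+1) → J) => (q.2 i, q.2 j)) ⁻¹' {p : J × J | E p.1 p.2})ᶜ := by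
        ext q; simp [hA]
      rw [he]
      exact (((hev i).prodMk (hev j)) hE).compl
  set W : Set (J × (Fin (m+1) → J)) :=
    {q | q.2 0 = q.1} ∩ ({q | ∀ i, q.2 i ∈ ballRel E r q.1}
      ∩ ({q | ∀ i j, i ≠ j → q.2 i ≠ q.2 j}
      ∩ ({q | ∀ z ∈ ballRel E r q.1, ∃ i, q.2 i = z}
      ∩ {q | ∀ i j, E (q.2 i) (q.2 j) ↔ A i j}))) with hW
  have hmeasW : MeasurableSet W := h0.inter (h1.inter (h2.inter (h3.inter h4)))
  have hSA : {x : J | BallIso E x r m A} = Prod.fst '' W := by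
    rw [image_fst_eq]
    ext x
    rw [Set.mem_setOf_eq, ballIso_iff_witness]
    constructor
    · rintro ⟨f, hf0, hmem, hinj, hcov, hedge⟩
      refine ⟨f, hf0, hmem, fun i j hij h => hij (hinj h), hcov, hedge⟩
    · rintro ⟨f, hf0, hmem, hinj, hcov, hedge⟩
      refine ⟨f, hf0, hmem, ?_, hcov, hedge⟩
      intro i j hij
      by_contra hne
      exact hinj i j hne hij
  rw [hSA]
  refine meas_proj_aux (((D+1)^r)^(m+1)) _ _ hmeasW ?_
  intro x
  refine le_trans (encard_mono ?_) (encard_pi_le (ballRel_finite hdegF hdegC r x)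
    (ballRel_encard_le hdegF hdegC r x) (m+1))
  intro f hf
  exact hf.2.1

end Meas


section Analysis

open Filter

lemma norm_one_div_natCast_le_one (k : ℕ) : ‖(1:ℝ)/(k:ℝ)‖ ≤ 1 := by
  rcases Nat.eq_zero_or_pos k with h | h
  · simp [h]
  · rw [Real.norm_eq_abs, abs_of_nonneg (by positivity)]
    rw [div_le_one (by exact_mod_cast h)]
    exact_mod_cast h

section Sandwich
variable {V : Type*} {E : V → V → Prop} {D : ℕ}

lemma one_div_compo_le_ball (hdegF : ∀ z : V, {y | E z y}.Finite)
    (hdegC : ∀ z : V, {y | E z y}.ncard ≤ D) (r : ℕ) (x : V) :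
    (1:ℝ)/(Nat.card ↥(compoRel E x)) ≤ 1/((ballRel E r x).ncard : ℝ) := by
  have hfin := ballRel_finite hdegF hdegC r x
  have hb : 0 < (ballRel E r x).ncard := (Set.ncard_pos hfin).mpr ⟨x, self_mem_ballRel⟩
  rw [Nat.card_coe_set_eq]
  by_cases hc : (compoRel E x).Finite
  · apply one_div_le_one_div_of_le
    · exact_mod_cast hb
    · exact_mod_cast Set.ncard_le_ncard ballRel_subset_compoRel hc
  · rw [Set.Infinite.ncard hc]
    simp

lemma one_div_ball_le_compo_add (hdegF : ∀ z : V, {y | E z y}.Finite)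
    (hdegC : ∀ z : V, {y | E z y}.ncard ≤ D) (r : ℕ) (x : V) :
    1/((ballRel E r x).ncard : ℝ) ≤ 1/(Nat.card ↥(compoRel E x)) + 1/((r:ℝ)+1) := by
  rcases ballRel_stab_or_card hdegF hdegC r x with h | h
  · rw [Nat.card_coe_set_eq, h]
    have h2 : 0 ≤ 1/((r:ℝ)+1) := by positivity
    linarith
  · have h1 : 1/((ballRel E r x).ncard : ℝ) ≤ 1/((r:ℝ)+1) := by
      apply one_div_le_one_div_of_le
      · positivity
      · exact_mod_cast h
    have h2 : 0 ≤ (1:ℝ)/(Nat.card ↥(compoRel E x)) := by positivity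
    linarith

lemma abs_ball_sub_compo_le (hdegF : ∀ z : V, {y | E z y}.Finite)
    (hdegC : ∀ z : V, {y | E z y}.ncard ≤ D) (r : ℕ) (x : V) :
    |1/((ballRel E r x).ncard : ℝ) - 1/(Nat.card ↥(compoRel E x))| ≤ 1/((r:ℝ)+1) := by
  rw [abs_le]
  have h1 := one_div_compo_le_ball hdegF hdegC r x
  have h2 := one_div_ball_le_compo_add hdegF hdegC r x
  have h3 : 0 ≤ 1/((r:ℝ)+1) := by positivity
  constructor <;> linarith

end Sandwich

section GSide
variable {J : Type u} [MeasurableSpace J] [StandardBorelSpace J]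
  {E : J → J → Prop} {D : ℕ}

open Classical in
lemma ite_ballIso_eq_indicator (r m : ℕ) (A : Fin (m+1) → Fin (m+1) → Prop) (c : ℝ) :
    (fun x : J => if BallIso E x r m A then c else 0)
      = Set.indicator {x : J | BallIso E x r m A} (fun _ => c) := by
  funext x
  by_cases h : BallIso E x r m A
  · rw [if_pos h]
    exact (Set.indicator_of_mem (show x ∈ {x : J | BallIso E x r m A} from h)
      (fun _ => c)).symm
  · rw [if_neg h]
    exact (Set.indicator_of_notMem (show x ∉ {x : J | BallIso E x r m A} from h)
      (fun _ => c)).symm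

open Classical in
lemma measurable_one_div_ball (hE : MeasurableSet {p : J × J | E p.1 p.2})
    (hdegF : ∀ z : J, {y | E z y}.Finite) (hdegC : ∀ z : J, {y | E z y}.ncard ≤ D)
    (r : ℕ) : Measurable (fun x : J => 1/((ballRel E r x).ncard : ℝ)) := by
  have heq : (fun x : J => 1/((ballRel E r x).ncard : ℝ))
      = fun x => ∑ m ∈ Finset.range ((D+1)^r), ∑ A : Fin (m+1) → Fin (m+1) → Prop,
          (if BallIso E x r m A then ((1:ℝ)/(m+1)) / (NA A) else 0) :=
    funext (fun x => (pointwise_ball_sum hdegF hdegC r x).symm)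
  rw [heq]
  refine Finset.measurable_sum _ (fun m _ => ?_)
  refine Finset.measurable_sum _ (fun A _ => ?_)
  have h2 := ite_ballIso_eq_indicator (E := E) r m A (((1:ℝ)/(m+1)) / (NA A))
  rw [h2]
  exact Measurable.indicator measurable_const (meas_ballIso hE hdegF hdegC r m A)

lemma tendsto_one_div_ball (hdegF : ∀ z : J, {y | E z y}.Finite)
    (hdegC : ∀ z : J, {y | E z y}.ncard ≤ D) (x : J) :
    Tendsto (fun r : ℕ => 1/((ballRel E r x).ncard : ℝ)) atTop
      (nhds (1/(Nat.card ↥(compoRel E x)))) := by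
  have h0 : Tendsto (fun r : ℕ => 1/((ballRel E r x).ncard : ℝ)
      - 1/(Nat.card ↥(compoRel E x))) atTop (nhds 0) := by
    apply squeeze_zero_norm (fun r => ?_) tendsto_one_div_add_atTop_nhds_zero_nat
    exact abs_ball_sub_compo_le hdegF hdegC r x
  have := h0.add_const (1/(Nat.card ↥(compoRel E x) : ℝ))
  simpa using this

lemma measurable_one_div_compo (hE : MeasurableSet {p : J × J | E p.1 p.2})
    (hdegF : ∀ z : J, {y | E z y}.Finite) (hdegC : ∀ z : J, {y | E z y}.ncard ≤ D) :
    Measurable (fun x : J => 1/(Nat.card ↥(compoRel E x) : ℝ)) :=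
  measurable_of_tendsto_metrizable (fun r => measurable_one_div_ball hE hdegF hdegC r)
    (tendsto_pi_nhds.mpr (tendsto_one_div_ball hdegF hdegC))

variable (μ : Measure J) [IsProbabilityMeasure μ]

lemma integrable_one_div_ball (hE : MeasurableSet {p : J × J | E p.1 p.2})
    (hdegF : ∀ z : J, {y | E z y}.Finite) (hdegC : ∀ z : J, {y | E z y}.ncard ≤ D)
    (r : ℕ) : Integrable (fun x : J => 1/((ballRel E r x).ncard : ℝ)) μ := by
  refine Integrable.mono' (integrable_const 1)
    (measurable_one_div_ball hE hdegF hdegC r).aestronglyMeasurable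
    (Filter.Eventually.of_forall (fun x => norm_one_div_natCast_le_one _))

lemma integrable_one_div_compo (hE : MeasurableSet {p : J × J | E p.1 p.2})
    (hdegF : ∀ z : J, {y | E z y}.Finite) (hdegC : ∀ z : J, {y | E z y}.ncard ≤ D) :
    Integrable (fun x : J => 1/(Nat.card ↥(compoRel E x) : ℝ)) μ := by
  refine Integrable.mono' (integrable_const 1)
    (measurable_one_div_compo hE hdegF hdegC).aestronglyMeasurable
    (Filter.Eventually.of_forall (fun x => norm_one_div_natCast_le_one _))

open Classical in
lemma integral_one_div_ball (hE : MeasurableSet {p : J × J | E p.1 p.2})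
    (hdegF : ∀ z : J, {y | E z y}.Finite) (hdegC : ∀ z : J, {y | E z y}.ncard ≤ D)
    (r : ℕ) :
    ∫ x, 1/((ballRel E r x).ncard : ℝ) ∂μ
      = ∑ m ∈ Finset.range ((D+1)^r), ∑ A : Fin (m+1) → Fin (m+1) → Prop,
          ((1:ℝ)/(m+1)) / (NA A) * (μ {x | BallIso E x r m A}).toReal := by
  have heq : (fun x : J => 1/((ballRel E r x).ncard : ℝ))
      = fun x => ∑ m ∈ Finset.range ((D+1)^r), ∑ A : Fin (m+1) → Fin (m+1) → Prop,
          (if BallIso E x r m A then ((1:ℝ)/(m+1)) / (NA A) else 0) :=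
    funext (fun x => (pointwise_ball_sum hdegF hdegC r x).symm)
  rw [heq]
  have hint : ∀ (m : ℕ) (A : Fin (m+1) → Fin (m+1) → Prop),
      Integrable (fun x : J => if BallIso E x r m A then ((1:ℝ)/(m+1)) / (NA A) else 0) μ := by
    intro m A
    rw [ite_ballIso_eq_indicator]
    rw [integrable_indicator_iff (meas_ballIso hE hdegF hdegC r m A)]
    exact integrableOn_const (measure_lt_top μ _).ne
  rw [integral_finset_sum _ (fun m _ => integrable_finset_sum _ (fun A _ => hint m A))]
  refine Finset.sum_congr rfl (fun m _ => ?_)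
  rw [integral_finset_sum _ (fun A _ => hint m A)]
  refine Finset.sum_congr rfl (fun A _ => ?_)
  rw [ite_ballIso_eq_indicator]
  rw [integral_indicator_const _ (meas_ballIso hE hdegF hdegC r m A)]
  rw [smul_eq_mul, mul_comm]
  rfl

lemma integral_ball_sub_compo (hE : MeasurableSet {p : J × J | E p.1 p.2})
    (hdegF : ∀ z : J, {y | E z y}.Finite) (hdegC : ∀ z : J, {y | E z y}.ncard ≤ D)
    (r : ℕ) :
    |(∫ x, 1/((ballRel E r x).ncard : ℝ) ∂μ)
      - ∫ x, 1/(Nat.card ↥(compoRel E x) : ℝ) ∂μ| ≤ 1/((r:ℝ)+1) := by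
  rw [← MeasureTheory.integral_sub (integrable_one_div_ball μ hE hdegF hdegC r)
    (integrable_one_div_compo μ hE hdegF hdegC)]
  calc |∫ x, (1/((ballRel E r x).ncard : ℝ) - 1/(Nat.card ↥(compoRel E x) : ℝ)) ∂μ|
      ≤ ∫ x, |1/((ballRel E r x).ncard : ℝ) - 1/(Nat.card ↥(compoRel E x) : ℝ)| ∂μ :=
        by
          have := MeasureTheory.norm_integral_le_integral_norm
            (fun x => (1/((ballRel E r x).ncard : ℝ) - 1/(Nat.card ↥(compoRel E x) : ℝ)))
            (μ := μ)
          simpa [Real.norm_eq_abs] using this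
    _ ≤ ∫ _x, 1/((r:ℝ)+1) ∂μ := by
        refine MeasureTheory.integral_mono_of_nonneg
          (Filter.Eventually.of_forall (fun x => abs_nonneg _)) (integrable_const _)
          (Filter.Eventually.of_forall (fun x => abs_ball_sub_compo_le hdegF hdegC r x))
    _ = 1/((r:ℝ)+1) := by
        rw [MeasureTheory.integral_const]
        simp

end GSide

end Analysis


section FinSide
open Filter
variable {V : Type*} [Fintype V] {E : V → V → Prop} {D : ℕ}

open Classical in
lemma sum_ite_ballIso (r m : ℕ) (A : Fin (m+1) → Fin (m+1) → Prop) :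
    (∑ u : V, (if BallIso E u r m A then (1:ℝ) else 0))
      = (Nat.card {u : V // BallIso E u r m A} : ℝ) := by
  classical
  rw [Finset.sum_boole]
  congr 1
  rw [Nat.card_eq_fintype_card, Fintype.card_subtype]

open Classical in
lemma avg_ball_eq (hdegC : ∀ z : V, {y | E z y}.ncard ≤ D) (r : ℕ) :
    (∑ u : V, 1/((ballRel E r u).ncard : ℝ)) / (Fintype.card V : ℝ)
      = ∑ m ∈ Finset.range ((D+1)^r), ∑ A : Fin (m+1) → Fin (m+1) → Prop,
          ((1:ℝ)/(m+1)) / (NA A) *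
            ((Nat.card {u : V // BallIso E u r m A} : ℝ) / (Fintype.card V : ℝ)) := by
  have hdegF : ∀ z : V, {y | E z y}.Finite := fun z => Set.toFinite _
  have hstep : (∑ u : V, 1/((ballRel E r u).ncard : ℝ))
      = ∑ m ∈ Finset.range ((D+1)^r), ∑ A : Fin (m+1) → Fin (m+1) → Prop,
          ((1:ℝ)/(m+1)) / (NA A) * (Nat.card {u : V // BallIso E u r m A} : ℝ) := by
    rw [Finset.sum_congr rfl (fun u _ => (pointwise_ball_sum hdegF hdegC r u).symm)]
    rw [Finset.sum_comm]
    refine Finset.sum_congr rfl (fun m _ => ?_)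
    rw [Finset.sum_comm]
    refine Finset.sum_congr rfl (fun A _ => ?_)
    have h2 : ∀ u : V, (if BallIso E u r m A then ((1:ℝ)/(m+1))/(NA A) else 0)
        = ((1:ℝ)/(m+1))/(NA A) * (if BallIso E u r m A then 1 else 0) := fun u => by
      rw [mul_ite, mul_one, mul_zero]
    rw [Finset.sum_congr rfl (fun u _ => h2 u), ← Finset.mul_sum, sum_ite_ballIso]
  rw [hstep, Finset.sum_div]
  refine Finset.sum_congr rfl (fun m _ => ?_)
  rw [Finset.sum_div]
  refine Finset.sum_congr rfl (fun A _ => ?_)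
  rw [mul_div_assoc]

lemma avg_diff_le [Nonempty V] (hdegC : ∀ z : V, {y | E z y}.ncard ≤ D) (r : ℕ) :
    |(∑ u : V, 1/((ballRel E r u).ncard : ℝ))/(Fintype.card V : ℝ)
      - (∑ u : V, 1/(Nat.card ↥(compoRel E u) : ℝ))/(Fintype.card V : ℝ)|
      ≤ 1/((r:ℝ)+1) := by
  have hdegF : ∀ z : V, {y | E z y}.Finite := fun z => Set.toFinite _
  have hcard : (0:ℝ) < (Fintype.card V : ℝ) := by exact_mod_cast Fintype.card_pos
  rw [div_sub_div_same, ← Finset.sum_sub_distrib, abs_div, abs_of_pos hcard]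
  rw [div_le_iff₀ hcard]
  calc |∑ u : V, (1/((ballRel E r u).ncard : ℝ) - 1/(Nat.card ↥(compoRel E u) : ℝ))|
      ≤ ∑ u : V, |1/((ballRel E r u).ncard : ℝ) - 1/(Nat.card ↥(compoRel E u) : ℝ)| :=
        Finset.abs_sum_le_sum_abs _ _
    _ ≤ ∑ _u : V, 1/((r:ℝ)+1) :=
        Finset.sum_le_sum (fun u _ => abs_ball_sub_compo_le hdegF hdegC r u)
    _ = (Fintype.card V : ℝ) * (1/((r:ℝ)+1)) := by
        rw [Finset.sum_const, nsmul_eq_mul]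
        simp
    _ = 1/((r:ℝ)+1) * (Fintype.card V : ℝ) := by ring

end FinSide

end AuxAll

section MainProof
open Filter

theorem finTotalRank_tendsto_totalRank' {J : Type*} [MeasurableSpace J]
    [StandardBorelSpace J] (G : Graphing J) (D : ℕ)
    (V : ℕ → Type*) [∀ n, Fintype (V n)] [∀ n, Nonempty (V n)]
    (En : ∀ n, V n → V n → Prop)
    (hsymm : ∀ n x y, En n x y → En n y x)
    (hdeg : ∀ n (x : V n), ({y | En n x y}).ncard ≤ D)
    (hdegG : ∀ x : J, ({y | G.E x y}).ncard ≤ D)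
    (hconv : ∀ (r m : ℕ) (A : Fin (m + 1) → Fin (m + 1) → Prop),
      Filter.Tendsto
        (fun n => (Nat.card {u : V n // BallIso (En n) u r m A} : ℝ) /
          (Fintype.card (V n)))
        Filter.atTop
        (nhds ((G.μ {x | BallIso G.E x r m A}).toReal))) :
    Filter.Tendsto (fun n => finTotalRank (V n) (En n)) Filter.atTop
      (nhds (1 - ∫ x, (1 : ℝ) / (Nat.card ↥(compoRel G.E x)) ∂G.μ)) := by
  classical
  haveI := G.prob
  set T : ℝ := ∫ x, (1:ℝ) / (Nat.card ↥(compoRel G.E x)) ∂G.μ with hTdef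
  have hmain : Tendsto (fun n =>
      (∑ u : V n, (1:ℝ)/(Nat.card ↥(compoRel (En n) u)))/(Fintype.card (V n) : ℝ))
      atTop (nhds T) := by
    rw [Metric.tendsto_atTop]
    intro ε hε
    have hε3 : 0 < ε/3 := by linarith
    obtain ⟨r, hr⟩ := (tendsto_one_div_add_atTop_nhds_zero_nat.eventually_lt_const hε3).exists
    have hb : Tendsto (fun n => ∑ m ∈ Finset.range ((D+1)^r),
        ∑ A : Fin (m+1) → Fin (m+1) → Prop,
          ((1:ℝ)/(m+1)) / (NA A) *
            ((Nat.card {u : V n // BallIso (En n) u r m A} : ℝ) / (Fintype.card (V n) : ℝ)))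
        atTop (nhds (∑ m ∈ Finset.range ((D+1)^r), ∑ A : Fin (m+1) → Fin (m+1) → Prop,
          ((1:ℝ)/(m+1)) / (NA A) * (G.μ {x | BallIso G.E x r m A}).toReal)) := by
      refine tendsto_finset_sum _ (fun m _ => tendsto_finset_sum _ (fun A _ => ?_))
      exact (hconv r m A).const_mul _
    obtain ⟨N, hN⟩ := (Metric.tendsto_atTop.mp hb) (ε/3) hε3
    refine ⟨N, fun n hn => ?_⟩
    have h1 := avg_ball_eq (V := V n) (E := En n) (hdeg n) r
    have h2 := avg_diff_le (V := V n) (E := En n) (hdeg n) r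
    have h3 := integral_one_div_ball (E := G.E) G.μ G.measE G.degFin hdegG r
    have h4 := integral_ball_sub_compo (E := G.E) G.μ G.measE G.degFin hdegG r
    have hbn := hN n hn
    rw [Real.dist_eq] at hbn ⊢
    rw [← h1] at hbn
    rw [← h3] at hbn
    set An := (∑ u : V n, (1:ℝ)/(Nat.card ↥(compoRel (En n) u)))/(Fintype.card (V n) : ℝ)
    set Bn := (∑ u : V n, 1/((ballRel (En n) r u).ncard : ℝ))/(Fintype.card (V n) : ℝ)
    set L := ∫ x, 1/((ballRel G.E r x).ncard : ℝ) ∂G.μ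
    have hAB : |An - Bn| ≤ 1/((r:ℝ)+1) := by
      rw [abs_sub_comm]
      exact h2
    have key : An - T = (An - Bn) + (Bn - L) + (L - T) := by ring
    calc |An - T| ≤ |An - Bn| + |Bn - L| + |L - T| := by
          rw [key]
          exact (abs_add_le _ _).trans (add_le_add_left (abs_add_le _ _) _)
      _ < ε/3 + ε/3 + ε/3 := by
          refine add_lt_add (add_lt_add_of_lt_of_lt ?_ hbn) (lt_of_le_of_lt h4 hr)
          exact lt_of_le_of_lt hAB hr
      _ = ε := by ring
  have heq : (fun n => finTotalRank (V n) (En n))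
      = fun n => 1 - (∑ u : V n, (1:ℝ)/(Nat.card ↥(compoRel (En n) u)))/(Fintype.card (V n) : ℝ) := by
    funext n
    rfl
  rw [heq, hTdef] at *
  exact hmain.const_sub 1

end MainProof

/-- If a sequence of finite graphs `Gₙ` with degrees uniformly bounded
by `D` locally (Benjamini–Schramm) converges to a graphing `G` — i.e. for every radius
and every rooted pattern, the probability that the rooted ball around a uniform random
node of `Gₙ` is isomorphic to the pattern converges to the corresponding probability for
a `λ`-random point of `G` — then the normalized total ranks converge:
`r̄(Gₙ) → r̄(G) = 1 − E_x(1/|V(G_x)|)`. -/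
theorem finTotalRank_tendsto_totalRank {J : Type*} [MeasurableSpace J]
    [StandardBorelSpace J] (G : Graphing J) (D : ℕ)
    (V : ℕ → Type*) [∀ n, Fintype (V n)] [∀ n, Nonempty (V n)]
    (En : ∀ n, V n → V n → Prop)
    (hsymm : ∀ n x y, En n x y → En n y x)
    (hdeg : ∀ n (x : V n), ({y | En n x y}).ncard ≤ D)
    (hdegG : ∀ x : J, ({y | G.E x y}).ncard ≤ D)
    (hconv : ∀ (r m : ℕ) (A : Fin (m + 1) → Fin (m + 1) → Prop),
      Filter.Tendsto
        (fun n => (Nat.card {u : V n // BallIso (En n) u r m A} : ℝ) /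
          (Fintype.card (V n)))
        Filter.atTop
        (nhds ((G.μ {x | BallIso G.E x r m A}).toReal))) :
    Filter.Tendsto (fun n => finTotalRank (V n) (En n)) Filter.atTop
      (nhds (1 - ∫ x, (1 : ℝ) / (Nat.card ↥(compoRel G.E x)) ∂G.μ)) :=
  finTotalRank_tendsto_totalRank' G D V En hsymm hdeg hdegG hconv
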